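/- Suppose a set A ⊆ ℂ has the property that it can be covered by L discs of radius ρ, and for every disc D of radius r ≤ ρ the set A ∩ D can be covered by K·N discs of radius 2r/K, where K, N, L are positive integers with 2^d·N/K^{d-1} < 1 for a given real d > 1. Then the d-dimensional Hausdorff measure of A is zero. -/

import Mathlib

open Complex MeasureTheory Topology Filter ENNReal

theorem stmt17 (A : Set ℂ) (K N L : ℕ) (hK : 0 < K) (hN : 0 < N) (hL : 0 < L)
    (d : ℝ) (hd : 1 < d) (hB : (2 : ℝ) ^ d * N / (K : ℝ) ^ (d - 1) < 1)
    (ρ : ℝ) (hρ : 0 < ρ)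
    (hcov0 : ∃ c : Fin L → ℂ, A ⊆ ⋃ i, Metric.closedBall (c i) ρ)
    (hcov : ∀ (p : ℂ) (r : ℝ), 0 < r → r ≤ ρ →
      ∃ c : Fin (K * N) → ℂ,
        A ∩ Metric.closedBall p r ⊆ ⋃ i, Metric.closedBall (c i) (2 * r / K)) :
    μH[d] A = 0 := by
  -- K > 2
  have hKpos : (0:ℝ) < K := by exact_mod_cast hK
  have hK2 : (2:ℝ) < K := by
    by_contra h
    push_neg at h
    have h1 : (K:ℝ) ^ (d-1) ≤ (2:ℝ) ^ (d-1) :=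
      Real.rpow_le_rpow hKpos.le h (by linarith)
    have h2 : (2:ℝ) ^ (d-1) < (2:ℝ) ^ d :=
      Real.rpow_lt_rpow_left_iff (by norm_num) |>.2 (by linarith)
    have hN1 : (1:ℝ) ≤ N := by exact_mod_cast hN
    have h3 : (2:ℝ) ^ d ≤ (2:ℝ) ^ d * N := le_mul_of_one_le_right (by positivity) hN1
    have h4 : (K:ℝ) ^ (d-1) > 0 := Real.rpow_pos_of_pos hKpos _
    rw [div_lt_one h4] at hB
    linarith
  have hfrac : (0:ℝ) < 2 / K := by positivity
  have hfrac1 : 2 / (K:ℝ) < 1 := by rw [div_lt_one hKpos]; linarith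
  -- iterated covers
  have key : ∀ ν : ℕ, ∃ c : Fin (L * (K * N) ^ ν) → ℂ,
      A ⊆ ⋃ i, Metric.closedBall (c i) (ρ * (2 / K) ^ ν) := by
    intro ν
    induction ν with
    | zero =>
      obtain ⟨c, hc⟩ := hcov0
      refine ⟨fun i => c (Fin.cast (by simp) i), fun x hx => ?_⟩
      obtain ⟨_, ⟨j, rfl⟩, hj⟩ := hc hx
      exact Set.mem_iUnion.2 ⟨Fin.cast (by simp) j, by simp only [pow_zero, mul_one]; exact hj⟩
    | succ ν ih =>
      obtain ⟨c, hc⟩ := ih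
      set r := ρ * (2 / K) ^ ν with hr
      have hrpos : 0 < r := by positivity
      have hrρ : r ≤ ρ := by
        have : (2 / (K:ℝ)) ^ ν ≤ 1 := pow_le_one₀ hfrac.le hfrac1.le
        nlinarith
      choose c' hc' using fun j => hcov (c j) r hrpos hrρ
      have hcard : L * (K * N) ^ (ν+1) = (L * (K * N) ^ ν) * (K * N) := by ring
      refine ⟨fun i => (fun p : Fin (L * (K * N) ^ ν) × Fin (K * N) => c' p.1 p.2)
        (finProdFinEquiv.symm (Fin.cast hcard i)), fun x hx => ?_⟩
      obtain ⟨_, ⟨j, rfl⟩, hj⟩ := hc hx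
      obtain ⟨_, ⟨i, rfl⟩, hi⟩ := hc' j ⟨hx, hj⟩
      refine Set.mem_iUnion.2 ⟨Fin.cast hcard.symm (finProdFinEquiv (j, i)), ?_⟩
      have hrad : 2 * r / K = ρ * (2 / K) ^ (ν+1) := by
        rw [hr]; ring
      simpa [hrad] using hi
  choose c hc using key
  -- apply the liminf bound
  have hrad : ∀ n : ℕ, (0:ℝ) ≤ ρ * (2 / K) ^ n := fun n => by positivity
  have hdiam : ∀ n (i : Fin (L * (K * N) ^ n)),
      EMetric.diam (Metric.closedBall (c n i) (ρ * (2 / K) ^ n))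
        ≤ ENNReal.ofReal (2 * (ρ * (2 / K) ^ n)) := by
    intro n i
    rw [← Metric.emetric_closedBall (hrad n)]
    calc EMetric.diam _ ≤ 2 * ENNReal.ofReal (ρ * (2 / K) ^ n) := EMetric.diam_closedBall
    _ = ENNReal.ofReal (2 * (ρ * (2 / K) ^ n)) := by
        rw [ENNReal.ofReal_mul (by norm_num : (0:ℝ) ≤ 2), ENNReal.ofReal_ofNat]
  have hr0 : Filter.Tendsto (fun n : ℕ => ENNReal.ofReal (2 * (ρ * (2 / K) ^ n)))
      Filter.atTop (𝓝 0) := by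
    rw [show (0:ℝ≥0∞) = ENNReal.ofReal 0 by simp]
    apply ENNReal.tendsto_ofReal
    have := tendsto_pow_atTop_nhds_zero_of_lt_one hfrac.le hfrac1
    have h2 := this.const_mul (2 * ρ)
    simpa [mul_comm, mul_assoc, mul_left_comm] using h2
  have hmain := MeasureTheory.Measure.hausdorffMeasure_le_liminf_sum d A
    (fun n : ℕ => ENNReal.ofReal (2 * (ρ * (2 / K) ^ n))) hr0
    (fun n i => Metric.closedBall (c n i) (ρ * (2 / K) ^ n))
    (Filter.Eventually.of_forall hdiam) (Filter.Eventually.of_forall hc)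
  -- bound the sums
  set q : ℝ := (2:ℝ) ^ d * N / (K : ℝ) ^ (d - 1) with hq
  have hq0 : 0 ≤ q := by positivity
  have hsum_le : ∀ n : ℕ,
      (∑ i : Fin (L * (K * N) ^ n),
        EMetric.diam (Metric.closedBall (c n i) (ρ * (2 / K) ^ n)) ^ d)
        ≤ ENNReal.ofReal (L * (2 * ρ) ^ d * q ^ n) := by
    intro n
    have hbound : ∀ i : Fin (L * (K * N) ^ n),
        EMetric.diam (Metric.closedBall (c n i) (ρ * (2 / K) ^ n)) ^ d
          ≤ ENNReal.ofReal ((2 * (ρ * (2 / K) ^ n)) ^ d) := by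
      intro i
      rw [← ENNReal.ofReal_rpow_of_nonneg (by positivity) (by linarith)]
      exact ENNReal.rpow_le_rpow (hdiam n i) (by linarith)
    calc (∑ i : Fin (L * (K * N) ^ n), _) ≤ ∑ _i : Fin (L * (K * N) ^ n),
          ENNReal.ofReal ((2 * (ρ * (2 / K) ^ n)) ^ d) := Finset.sum_le_sum fun i _ => hbound i
    _ = ENNReal.ofReal (L * (2 * ρ) ^ d * q ^ n) := by
        rw [Finset.sum_const, Finset.card_univ, Fintype.card_fin, nsmul_eq_mul,
          ← ENNReal.ofReal_natCast (L * (K * N) ^ n),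
          ← ENNReal.ofReal_mul (by positivity)]
        congr 1
        push_cast
        have e1 : (2 * (ρ * (2 / (K:ℝ)) ^ n)) = (2 * ρ) * (2 / K) ^ n := by ring
        rw [e1, Real.mul_rpow (by positivity) (by positivity),
          ← Real.rpow_natCast (2 / (K:ℝ)) n, ← Real.rpow_mul hfrac.le,
          mul_comm (n:ℝ) d, Real.rpow_mul hfrac.le, Real.rpow_natCast,
          Real.div_rpow (by norm_num : (0:ℝ) ≤ 2) hKpos.le]
        have e3 : q = (K:ℝ) * N * ((2:ℝ) ^ d / (K:ℝ) ^ d) := by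
          rw [hq, Real.rpow_sub hKpos, Real.rpow_one]
          field_simp
        rw [e3, mul_pow, mul_pow]
        ring
  -- conclude
  have htend : Filter.Tendsto (fun n : ℕ => ENNReal.ofReal (L * (2 * ρ) ^ d * q ^ n))
      Filter.atTop (𝓝 0) := by
    rw [show (0:ℝ≥0∞) = ENNReal.ofReal 0 by simp]
    apply ENNReal.tendsto_ofReal
    have hq1 : q < 1 := hB
    have := (tendsto_pow_atTop_nhds_zero_of_lt_one hq0 hq1).const_mul ((L:ℝ) * (2 * ρ) ^ d)
    simpa [mul_assoc] using this
  have hliminf : Filter.liminf (fun n : ℕ => ∑ i : Fin (L * (K * N) ^ n),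
      EMetric.diam (Metric.closedBall (c n i) (ρ * (2 / K) ^ n)) ^ d) Filter.atTop = 0 := by
    have hsq : Filter.Tendsto (fun n : ℕ => ∑ i : Fin (L * (K * N) ^ n),
        EMetric.diam (Metric.closedBall (c n i) (ρ * (2 / K) ^ n)) ^ d)
        Filter.atTop (𝓝 0) := by
      apply tendsto_of_tendsto_of_tendsto_of_le_of_le tendsto_const_nhds htend
        (fun n => zero_le) hsum_le
    exact hsq.liminf_eq
  erw [hliminf] at hmain
  exact le_antisymm hmain zero_le
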